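/- Let X be a real Banach space and let A be a set of unit vectors a in l₁(ℕ) such that whenever a₀ ∈ A and a ∈ l₁(ℕ) is a unit vector with sign(a(n)) = sign(a₀(n)) for all n, then a ∈ A. Suppose x : ℕ → X is a bounded function with ‖x(n)‖ ≤ 1 for all n and inf_{a∈A} ‖Σ_n a(n)x(n)‖ ≥ c > 0. Then for every a₀ ∈ A with finite support there exists f ∈ X* with ‖f‖ ≤ 1 such that for every n in the support of a₀: |f(x(n))| ≥ c and sign(f(x(n))) = sign(a₀(n)). -/

import Mathlib

open Pointwise


/-- Lemma 1 for Γ = ℕ: Let A be a set of unit vectors of l₁(ℕ) closed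
under keeping the sign pattern. If x : ℕ → X has ‖x(n)‖ ≤ 1 and
‖Σ_n a(n)x(n)‖ ≥ c > 0 for every a ∈ A, then for every finitely supported a₀ ∈ A
there is f ∈ X* with ‖f‖ ≤ 1 such that |f(x(n))| ≥ c and
sign(f(x(n))) = sign(a₀(n)) for every n in the support of a₀. -/
theorem stmt_14 {X : Type*} [NormedAddCommGroup X] [NormedSpace ℝ X] [CompleteSpace X]
    (A : Set (ℕ → ℝ))
    (hA1 : ∀ a ∈ A, Summable (fun n => |a n|) ∧ ∑' n, |a n| = 1)
    (hA2 : ∀ a₀ ∈ A, ∀ a : ℕ → ℝ, Summable (fun n => |a n|) → ∑' n, |a n| = 1 →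
      (∀ n, Real.sign (a n) = Real.sign (a₀ n)) → a ∈ A)
    (x : ℕ → X) (hx : ∀ n, ‖x n‖ ≤ 1)
    (c : ℝ) (hc : 0 < c)
    (hinf : ∀ a ∈ A, c ≤ ‖∑' n, a n • x n‖) :
    ∀ a₀ ∈ A, (Function.support a₀).Finite →
      ∃ f : X →L[ℝ] ℝ, ‖f‖ ≤ 1 ∧ ∀ n ∈ Function.support a₀,
        c ≤ |f (x n)| ∧ Real.sign (f (x n)) = Real.sign (a₀ n) := by
  intro a₀ ha₀ hfin
  classical
  by_cases hne : Function.support a₀ = ∅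
  · exact ⟨0, by simp, fun n hn => by rw [hne] at hn; exact absurd hn (Set.notMem_empty n)⟩
  obtain ⟨n₀, hn₀⟩ := Set.nonempty_iff_ne_empty.2 hne
  set s : Finset ℕ := hfin.toFinset with hs_def
  have hmem_s : ∀ n, n ∈ s ↔ a₀ n ≠ 0 := by
    intro n; simp [hs_def, Set.Finite.mem_toFinset, Function.mem_support]
  set p : ℕ → X := fun n => Real.sign (a₀ n) • x n with hp_def
  set K : Set X := {y | ∃ w : ℕ → ℝ, (∀ n, 0 ≤ w n) ∧ (∀ n ∉ s, w n = 0) ∧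
      (∑ n ∈ s, w n) = 1 ∧ y = ∑ n ∈ s, w n • p n} with hK_def
  have hsuma₀ := (hA1 a₀ ha₀).1
  have htsa₀ := (hA1 a₀ ha₀).2
  have hsumx : Summable (fun n => a₀ n • x n) := by
    apply Summable.of_norm_bounded hsuma₀
    intro n
    rw [norm_smul, Real.norm_eq_abs]
    calc |a₀ n| * ‖x n‖ ≤ |a₀ n| * 1 := mul_le_mul_of_nonneg_left (hx n) (abs_nonneg _)
      _ = |a₀ n| := mul_one _
  set z : X := ∑' n, a₀ n • x n with hz_def
  -- Key step: every convex combination has norm at least c.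
  have hK : ∀ y ∈ K, c ≤ ‖y‖ := by
    rintro y ⟨w, hw0, hwz, hws, rfl⟩
    set y : X := ∑ n ∈ s, w n • p n with hy_def
    have key : ∀ ε : ℝ, 0 < ε → ε < 1 → c ≤ ‖y‖ + ε * ‖z - y‖ := by
      intro ε hε hε1
      set a : ℕ → ℝ := fun n => ((1 - ε) * w n + ε * |a₀ n|) * Real.sign (a₀ n) with ha_def
      have hcoeff : ∀ n, 0 ≤ (1 - ε) * w n + ε * |a₀ n| := fun n =>
        add_nonneg (mul_nonneg (by linarith) (hw0 n)) (mul_nonneg hε.le (abs_nonneg _))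
      have habs : ∀ n, |a n| = (1 - ε) * w n + ε * |a₀ n| := by
        intro n
        by_cases h : a₀ n = 0
        · have hw : w n = 0 := hwz n (by simp [hmem_s, h])
          simp [ha_def, h, hw]
        · rw [ha_def]
          have h1 : |Real.sign (a₀ n)| = 1 := by
            rcases Real.sign_apply_eq_of_ne_zero _ h with h' | h' <;> simp [h']
          rw [abs_mul, h1, mul_one, abs_of_nonneg (hcoeff n)]
      have hsign : ∀ n, Real.sign (a n) = Real.sign (a₀ n) := by
        intro n
        rcases lt_trichotomy (a₀ n) 0 with h | h | h
        · have hpos : 0 < (1 - ε) * w n + ε * |a₀ n| := by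
            have h2 : 0 < ε * |a₀ n| := mul_pos hε (abs_pos.2 h.ne)
            have h3 : 0 ≤ (1 - ε) * w n := mul_nonneg (by linarith) (hw0 n)
            linarith
          have haneg : a n < 0 := by
            rw [ha_def]
            simp only
            rw [Real.sign_of_neg h]
            nlinarith
          rw [Real.sign_of_neg haneg, Real.sign_of_neg h]
        · simp [ha_def, h]
        · have hpos : 0 < (1 - ε) * w n + ε * |a₀ n| := by
            have h2 : 0 < ε * |a₀ n| := mul_pos hε (abs_pos.2 h.ne')
            have h3 : 0 ≤ (1 - ε) * w n := mul_nonneg (by linarith) (hw0 n)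
            linarith
          have hapos : 0 < a n := by
            rw [ha_def]
            simp only
            rw [Real.sign_of_pos h]
            nlinarith
          rw [Real.sign_of_pos hapos, Real.sign_of_pos h]
      have hsum1 : Summable (fun n => (1 - ε) * w n) := by
        apply summable_of_ne_finset_zero (s := s)
        intro n hn; rw [hwz n hn, mul_zero]
      have hsum2 : Summable (fun n => ε * |a₀ n|) := hsuma₀.mul_left ε
      have hsabs : Summable (fun n => |a n|) := by
        refine (summable_congr habs).2 (hsum1.add hsum2)
      have htsw : ∑' n, w n = 1 := by
        rw [tsum_eq_sum (s := s) hwz, hws]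
      have hts : ∑' n, |a n| = 1 := by
        calc ∑' n, |a n| = ∑' n, ((1 - ε) * w n + ε * |a₀ n|) := tsum_congr habs
          _ = (∑' n, (1 - ε) * w n) + ∑' n, ε * |a₀ n| := Summable.tsum_add hsum1 hsum2
          _ = (1 - ε) * (∑' n, w n) + ε * (∑' n, |a₀ n|) := by rw [tsum_mul_left, tsum_mul_left]
          _ = 1 := by rw [htsw, htsa₀]; ring
      have ha_mem : a ∈ A := hA2 a₀ ha₀ a hsabs hts hsign
      have hc' := hinf a ha_mem
      have hsplit : ∀ n, a n • x n =
          ((1 - ε) * (w n * Real.sign (a₀ n))) • x n + (ε * a₀ n) • x n := by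
        intro n
        rw [← add_smul]
        congr 1
        have hsma : Real.sign (a₀ n) * |a₀ n| = a₀ n := by
          rcases lt_trichotomy (a₀ n) 0 with h | h | h
          · rw [Real.sign_of_neg h, abs_of_neg h]; ring
          · simp [h]
          · rw [Real.sign_of_pos h, abs_of_pos h]; ring
        rw [ha_def]
        simp only
        linear_combination ε * hsma
      have hS1 : Summable (fun n => ((1 - ε) * (w n * Real.sign (a₀ n))) • x n) := by
        apply summable_of_ne_finset_zero (s := s)
        intro n hn; rw [hwz n hn]; simp
      have hS2 : Summable (fun n => (ε * a₀ n) • x n) := by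
        have h2 := hsumx.const_smul ε
        refine (summable_congr fun n => ?_).2 h2
        rw [mul_smul]
      have htsum : (∑' n, a n • x n) = (1 - ε) • y + ε • z := by
        calc (∑' n, a n • x n)
            = ∑' n, (((1 - ε) * (w n * Real.sign (a₀ n))) • x n + (ε * a₀ n) • x n) :=
              tsum_congr hsplit
          _ = (∑' n, ((1 - ε) * (w n * Real.sign (a₀ n))) • x n) +
              ∑' n, (ε * a₀ n) • x n := Summable.tsum_add hS1 hS2
          _ = (1 - ε) • y + ε • z := by
              congr 1
              · rw [tsum_eq_sum (s := s) (fun n hn => by rw [hwz n hn]; simp)]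
                rw [hy_def, Finset.smul_sum]
                refine Finset.sum_congr rfl fun n _ => ?_
                simp only [hp_def, smul_smul, mul_assoc]
              · rw [hz_def, ← (hsumx.hasSum.const_smul ε).tsum_eq]
                exact tsum_congr fun n => by rw [mul_smul]
      rw [htsum] at hc'
      have hrw : (1 - ε) • y + ε • z = y + ε • (z - y) := by
        rw [smul_sub, sub_smul, one_smul]; abel
      rw [hrw] at hc'
      calc c ≤ ‖y + ε • (z - y)‖ := hc'
        _ ≤ ‖y‖ + ‖ε • (z - y)‖ := norm_add_le _ _
        _ = ‖y‖ + ε * ‖z - y‖ := by rw [norm_smul, Real.norm_eq_abs, abs_of_pos hε]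
    by_contra hcon
    push_neg at hcon
    set M : ℝ := ‖z - y‖ with hM_def
    have hM : 0 ≤ M := norm_nonneg _
    set ε : ℝ := min (1 / 2) ((c - ‖y‖) / (2 * (M + 1))) with hε_def
    have hεpos : 0 < ε := lt_min (by norm_num) (div_pos (by linarith) (by positivity))
    have hε1 : ε < 1 := lt_of_le_of_lt (min_le_left _ _) (by norm_num)
    have h1 := key ε hεpos hε1
    have hεM : ε * M < c - ‖y‖ := by
      calc ε * M ≤ ((c - ‖y‖) / (2 * (M + 1))) * M :=
            mul_le_mul_of_nonneg_right (min_le_right _ _) hM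
        _ < c - ‖y‖ := by
            rw [div_mul_eq_mul_div, div_lt_iff₀ (by positivity)]
            nlinarith
    linarith
  -- K is convex
  have hKconv : Convex ℝ K := by
    rintro y₁ ⟨w₁, h₁0, h₁z, h₁s, rfl⟩ y₂ ⟨w₂, h₂0, h₂z, h₂s, rfl⟩ a b ha hb hab
    refine ⟨fun n => a * w₁ n + b * w₂ n,
      fun n => add_nonneg (mul_nonneg ha (h₁0 n)) (mul_nonneg hb (h₂0 n)),
      fun n hn => by simp only; rw [h₁z n hn, h₂z n hn]; ring, ?_, ?_⟩
    · simp only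
      rw [Finset.sum_add_distrib, ← Finset.mul_sum, ← Finset.mul_sum, h₁s, h₂s]
      linarith
    · rw [Finset.smul_sum, Finset.smul_sum, ← Finset.sum_add_distrib]
      refine Finset.sum_congr rfl fun n _ => ?_
      module
  -- each p n (for n in the support) is in K
  have hpK : ∀ n, a₀ n ≠ 0 → p n ∈ K := by
    intro n hn
    refine ⟨fun m => if m = n then 1 else 0, fun m => by by_cases h : m = n <;> simp [h],
      fun m hm => by
        by_cases h : m = n
        · exact absurd ((hmem_s m).2 (h ▸ hn)) hm
        · simp [h], ?_, ?_⟩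
    · rw [Finset.sum_ite_eq' s n (fun _ => (1 : ℝ))]
      simp [hmem_s, hn]
    · have : ∀ m ∈ s, (if m = n then (1:ℝ) else 0) • p m = if m = n then p m else 0 := by
        intro m _
        by_cases h : m = n <;> simp [h]
      rw [Finset.sum_congr rfl this, Finset.sum_ite_eq' s n p]
      simp [hmem_s, hn]
  have hn₀' : a₀ n₀ ≠ 0 := Function.mem_support.1 hn₀
  -- the open set U = K + ball 0 c
  set U : Set X := K + Metric.ball (0 : X) c with hU_def
  have hUconv : Convex ℝ U := hKconv.add (convex_ball 0 c)
  have hUopen : IsOpen U := IsOpen.add_left Metric.isOpen_ball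
  have h0U : (0 : X) ∉ U := by
    rintro ⟨k, hk, b, hb, hkb⟩
    have hkc := hK k hk
    have hbc : ‖b‖ < c := mem_ball_zero_iff.1 hb
    have : k = -b := eq_neg_of_add_eq_zero_left hkb
    rw [this, norm_neg] at hkc
    linarith
  obtain ⟨f, hf⟩ := geometric_hahn_banach_point_open hUconv hUopen h0U
  simp only [map_zero] at hf
  have hfK : ∀ k ∈ K, 0 < f k := by
    intro k hk
    have : k + 0 ∈ U := Set.add_mem_add hk (mem_ball_zero_iff.2 (by simpa using hc))
    rw [add_zero] at this
    exact hf k this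
  have hfn : 0 < ‖f‖ := by
    rw [norm_pos_iff]
    intro h
    have := hfK (p n₀) (hpK n₀ hn₀')
    rw [h] at this
    simp at this
  -- quantitative bound: f k ≥ c * ‖f‖ on K
  have hlow : ∀ k ∈ K, c * ‖f‖ ≤ f k := by
    intro k hk
    by_contra h
    push_neg at h
    have h' : f k / c < ‖f‖ := (div_lt_iff₀ hc).2 (by nlinarith)
    obtain ⟨v, hv1, hv2⟩ := f.exists_lt_apply_of_lt_opNorm h'
    rw [Real.norm_eq_abs] at hv2
    have hfv : f k < c * |f v| := by
      have := (div_lt_iff₀ hc).1 hv2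
      nlinarith
    set b : X := (-(c * Real.sign (f v))) • v with hb_def
    have hsle : |Real.sign (f v)| ≤ 1 := by
      rcases Real.sign_apply_eq (f v) with h' | h' | h' <;> simp [h']
    have hb : ‖b‖ < c := by
      rw [hb_def, norm_smul, Real.norm_eq_abs, abs_neg, abs_mul, abs_of_pos hc]
      have h1 : c * |Real.sign (f v)| ≤ c := by nlinarith
      calc c * |Real.sign (f v)| * ‖v‖ ≤ c * ‖v‖ :=
            mul_le_mul_of_nonneg_right h1 (norm_nonneg v)
        _ < c := mul_lt_of_lt_one_right hc hv1
    have hfb : f b = -(c * |f v|) := by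
      rw [hb_def, map_smul, smul_eq_mul]
      rcases lt_trichotomy (f v) 0 with h' | h' | h'
      · rw [Real.sign_of_neg h', abs_of_neg h']; ring
      · simp [h']
      · rw [Real.sign_of_pos h', abs_of_pos h']; ring
    have hpos : 0 < f (k + b) := hf _ (Set.add_mem_add hk (mem_ball_zero_iff.2 hb))
    rw [map_add, hfb] at hpos
    linarith
  -- normalize f
  set g : X →L[ℝ] ℝ := ‖f‖⁻¹ • f with hg_def
  have hgnorm : ‖g‖ = 1 := by
    rw [hg_def, norm_smul ‖f‖⁻¹ f, Real.norm_eq_abs, abs_of_pos (inv_pos.2 hfn),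
      inv_mul_cancel₀ hfn.ne']
  have hgapp : ∀ v, g v = ‖f‖⁻¹ * f v := fun v => rfl
  have hg : ∀ k ∈ K, c ≤ g k := by
    intro k hk
    have hlk := hlow k hk
    rw [hgapp, show c = ‖f‖⁻¹ * (c * ‖f‖) by field_simp]
    exact mul_le_mul_of_nonneg_left hlk (inv_nonneg.2 hfn.le)
  refine ⟨g, le_of_eq hgnorm, fun n hn => ?_⟩
  have hn' : a₀ n ≠ 0 := Function.mem_support.1 hn
  have hcg : c ≤ g (p n) := hg _ (hpK n hn')
  have hgp : g (p n) = Real.sign (a₀ n) * g (x n) := by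
    simp [hp_def, map_smul, smul_eq_mul]
  rcases lt_trichotomy (a₀ n) 0 with h | h | h
  · rw [Real.sign_of_neg h] at hgp
    rw [hgp] at hcg
    have hlt : g (x n) < 0 := by linarith
    exact ⟨le_abs.2 (Or.inr (by linarith)),
      by rw [Real.sign_of_neg hlt, Real.sign_of_neg h]⟩
  · exact absurd h hn'
  · rw [Real.sign_of_pos h] at hgp
    rw [hgp] at hcg
    have hgt : 0 < g (x n) := by linarith
    exact ⟨le_abs.2 (Or.inl (by linarith)),
      by rw [Real.sign_of_pos hgt, Real.sign_of_pos h]⟩
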